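/- The translation from GEPCF to the λY-calculus preserves typing: if Γ ⊢ V : T then ⟦Γ⟧ ⊢ ⟦V⟧ : ⟦T⟧, and if Γ ⊢_E C : T then ⟦Γ⟧ ⊢ ⟦C⟧ : ⟦E⟧ → (⟦T⟧ → o) → o. -/

import Mathlib

/-! The λY-calculus: simply-typed λ-calculus with a fixpoint combinator Y and
first-order constants drawn from a signature `F` with arity `ar : F → ℕ`. -/

namespace LamY

/-- Simple types: `o` and arrow types. -/
inductive Ty : Type
  | o : Ty
  | arr : Ty → Ty → Ty
  deriving DecidableEq

/-- Terms (de Bruijn representation) over a set `F` of first-order constants. -/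
inductive Tm (F : Type) : Type
  | var : ℕ → Tm F
  | lam : Tm F → Tm F
  | app : Tm F → Tm F → Tm F
  | fixY : Tm F → Tm F
  | const : F → Tm F

namespace Tm

variable {F : Type}

/-- Lifting of a renaming under a binder. -/
def upr (ρ : ℕ → ℕ) : ℕ → ℕ
  | 0 => 0
  | n + 1 => ρ n + 1

/-- Renaming of variables. -/
def rename (ρ : ℕ → ℕ) : Tm F → Tm F
  | .var n => .var (ρ n)
  | .lam M => .lam (rename (upr ρ) M)
  | .app M N => .app (rename ρ M) (rename ρ N)
  | .fixY M => .fixY (rename ρ M)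
  | .const f => .const f

/-- Shift all free variables up by one. -/
def lift (M : Tm F) : Tm F := rename Nat.succ M

/-- Lifting of a substitution under a binder. -/
def ups (σ : ℕ → Tm F) : ℕ → Tm F
  | 0 => .var 0
  | n + 1 => lift (σ n)

/-- Simultaneous substitution. -/
def subst (σ : ℕ → Tm F) : Tm F → Tm F
  | .var n => σ n
  | .lam M => .lam (subst (ups σ) M)
  | .app M N => .app (subst σ M) (subst σ N)
  | .fixY M => .fixY (subst σ M)
  | .const f => .const f

/-- Substitution `M[N/x]` of `N` for the variable `0` in `M`. -/
def subst0 (N : Tm F) (M : Tm F) : Tm F :=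
  subst (fun n => match n with | 0 => N | n + 1 => .var n) M

/-- A term applied to a list of arguments: `appArgs M [N₁,…,Nₖ] = M N₁ ⋯ Nₖ`. -/
def appArgs (M : Tm F) : List (Tm F) → Tm F
  | [] => M
  | N :: Ns => appArgs (.app M N) Ns

end Tm

open Tm

/-- Weak head reduction: β at the head, unfolding of `Y`, and reduction of the
head of an application. -/
inductive Step {F : Type} : Tm F → Tm F → Prop
  | beta (M N : Tm F) : Step (.app (.lam M) N) (subst0 N M)
  | fix (M : Tm F) : Step (.fixY M) (.app M (.fixY M))
  | appL {M M' : Tm F} (N : Tm F) : Step M M' → Step (.app M N) (.app M' N)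

/-- A term is in weak head normal form when no weak head reduction applies. -/
def WHNF {F : Type} (M : Tm F) : Prop := ¬ ∃ N, Step M N

/-- The type `o^n → o` of a first-order constant with arity `n`. -/
def constTy : ℕ → Ty
  | 0 => .o
  | n + 1 => .arr .o (constTy n)

/-- Typing judgement for λY-terms. Contexts are lists of types (de Bruijn). -/
inductive HasTy {F : Type} (ar : F → ℕ) : List Ty → Tm F → Ty → Prop
  | var {Γ n T} : Γ[n]? = some T → HasTy ar Γ (.var n) T
  | lam {Γ M T U} : HasTy ar (T :: Γ) M U → HasTy ar Γ (.lam M) (.arr T U)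
  | app {Γ M N T U} : HasTy ar Γ M (.arr T U) → HasTy ar Γ N T →
      HasTy ar Γ (.app M N) U
  | fix {Γ M T} : HasTy ar Γ M (.arr T T) → HasTy ar Γ (.fixY M) T
  | const {Γ} (f : F) : HasTy ar Γ (.const f) (constTy (ar f))

end LamY

/-! GEPCF: EPCF extended with *restricted* handlers (for generic effects).
A handler consists of a return clause `Cr` (binding the returned value) and,
for each handled operation `σᵢ : Bᵢ ⇝ kᵢ`, a clause `Hop σᵢ` binding the
parameter only (no access to the continuation) and returning a result of the
enumeration type `kᵢ`. Effect rows are (finite) lists of operations, and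
λ-abstractions carry the latent effect row of their arrow type. -/

namespace GEPCF

/-- GEPCF types: base types, enumeration types, effect-annotated arrows. -/
inductive GTy (BV Op : Type) : Type
  | base : BV → GTy BV Op
  | enum : ℕ → GTy BV Op
  | arr : GTy BV Op → List Op → GTy BV Op → GTy BV Op

mutual
/-- GEPCF values (de Bruijn representation). -/
inductive GVal (CV Op : Type) : Type
  | cv : CV → GVal CV Op
  | num : ℕ → ℕ → GVal CV Op
  | var : ℕ → GVal CV Op
  | lam : List Op → GComp CV Op → GVal CV Op
  | fixv : GVal CV Op → GVal CV Op
/-- GEPCF computations. `handle Eh Cr Hop C` handles the operations in the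
row `Eh` of the computation `C`, with return clause `Cr` and operation
clauses `Hop` (each binding only the parameter, index 0). -/
inductive GComp (CV Op : Type) : Type
  | app : GVal CV Op → GVal CV Op → GComp CV Op
  | ret : GVal CV Op → GComp CV Op
  | letin : GComp CV Op → GComp CV Op → GComp CV Op
  | opc : Op → GVal CV Op → GComp CV Op → GComp CV Op
  | case : (k : ℕ) → GVal CV Op → (Fin k → GComp CV Op) → GComp CV Op
  | handle : List Op → GComp CV Op → (Op → GComp CV Op) → GComp CV Op →
      GComp CV Op
end

variable {CV Op : Type}

/-- Lifting of a renaming under a binder. -/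
def upr (ρ : ℕ → ℕ) : ℕ → ℕ
  | 0 => 0
  | n + 1 => ρ n + 1

mutual
/-- Renaming of variables in values. -/
def renV (ρ : ℕ → ℕ) : GVal CV Op → GVal CV Op
  | .cv v => .cv v
  | .num n k => .num n k
  | .var n => .var (ρ n)
  | .lam E C => .lam E (renC (upr ρ) C)
  | .fixv V => .fixv (renV (upr ρ) V)
/-- Renaming of variables in computations. -/
def renC (ρ : ℕ → ℕ) : GComp CV Op → GComp CV Op
  | .app V W => .app (renV ρ V) (renV ρ W)
  | .ret V => .ret (renV ρ V)
  | .letin C B => .letin (renC ρ C) (renC (upr ρ) B)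
  | .opc σ V C => .opc σ (renV ρ V) (renC (upr ρ) C)
  | .case k V Cs => .case k (renV ρ V) (fun i => renC ρ (Cs i))
  | .handle Eh Cr Hop C =>
      .handle Eh (renC (upr ρ) Cr) (fun σ => renC (upr ρ) (Hop σ)) (renC ρ C)
end

/-- Lifting of a substitution under a binder. -/
def upsG (σ : ℕ → GVal CV Op) : ℕ → GVal CV Op
  | 0 => .var 0
  | n + 1 => renV Nat.succ (σ n)

mutual
/-- Simultaneous substitution in values. -/
def subV (σ : ℕ → GVal CV Op) : GVal CV Op → GVal CV Op
  | .cv v => .cv v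
  | .num n k => .num n k
  | .var n => σ n
  | .lam E C => .lam E (subC (upsG σ) C)
  | .fixv V => .fixv (subV (upsG σ) V)
/-- Simultaneous substitution in computations. -/
def subC (σ : ℕ → GVal CV Op) : GComp CV Op → GComp CV Op
  | .app V W => .app (subV σ V) (subV σ W)
  | .ret V => .ret (subV σ V)
  | .letin C B => .letin (subC σ C) (subC (upsG σ) B)
  | .opc op V C => .opc op (subV σ V) (subC (upsG σ) C)
  | .case k V Cs => .case k (subV σ V) (fun i => subC σ (Cs i))
  | .handle Eh Cr Hop C =>
      .handle Eh (subC (upsG σ) Cr) (fun op => subC (upsG σ) (Hop op))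
        (subC σ C)
end

/-- Substitution `C[W/x]` of the value `W` for the variable `0`. -/
def subst0C (W : GVal CV Op) (C : GComp CV Op) : GComp CV Op :=
  subC (fun n => match n with | 0 => W | n + 1 => .var n) C

/-- Substitution `V[W/x]` of the value `W` for the variable `0`. -/
def subst0V (W : GVal CV Op) (V : GVal CV Op) : GVal CV Op :=
  subV (fun n => match n with | 0 => W | n + 1 => .var n) V

/-- The reduction relation of GEPCF: the EPCF rules, plus
`handle H (return V) → C_r[x := V]` and
`handle H (σᵢ(V; y.C)) → let y = Cᵢ[x := V] in handle H C`. -/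
inductive GStep : GComp CV Op → GComp CV Op → Prop
  | beta (E : List Op) (C : GComp CV Op) (W : GVal CV Op) :
      GStep (.app (.lam E C) W) (subst0C W C)
  | fix (V W : GVal CV Op) :
      GStep (.app (.fixv V) W) (.app (subst0V (.fixv V) V) W)
  | case {n k : ℕ} (h : n < k) (Cs : Fin k → GComp CV Op) :
      GStep (.case k (.num n k) Cs) (Cs ⟨n, h⟩)
  | letRet (V : GVal CV Op) (C : GComp CV Op) :
      GStep (.letin (.ret V) C) (subst0C V C)
  | letCong {C C' : GComp CV Op} (B : GComp CV Op) :
      GStep C C' → GStep (.letin C B) (.letin C' B)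
  | letOp (σ : Op) (V : GVal CV Op) (C D : GComp CV Op) :
      GStep (.letin (.opc σ V C) D)
        (.opc σ V (.letin C (renC (upr Nat.succ) D)))
  | hCong {C C' : GComp CV Op} (Eh : List Op) (Cr : GComp CV Op)
      (Hop : Op → GComp CV Op) :
      GStep C C' → GStep (.handle Eh Cr Hop C) (.handle Eh Cr Hop C')
  | hRet (Eh : List Op) (Cr : GComp CV Op) (Hop : Op → GComp CV Op)
      (V : GVal CV Op) :
      GStep (.handle Eh Cr Hop (.ret V)) (subst0C V Cr)
  | hOp {σ : Op} (Eh : List Op) (Cr : GComp CV Op) (Hop : Op → GComp CV Op)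
      (V : GVal CV Op) (C : GComp CV Op) :
      σ ∈ Eh →
      GStep (.handle Eh Cr Hop (.opc σ V C))
        (.letin (subst0C V (Hop σ))
          (.handle Eh (renC (upr Nat.succ) Cr)
            (fun op => renC (upr Nat.succ) (Hop op)) C))

section Typing

variable {BV : Type} (cvTy : CV → BV) (opPar : Op → BV) (opAr : Op → ℕ)

mutual
/-- Typing judgment for GEPCF values. -/
inductive GVTy : List (GTy BV Op) → GVal CV Op → GTy BV Op → Prop
  | cv {Γ} (v : CV) : GVTy Γ (.cv v) (.base (cvTy v))
  | num {Γ n k} : n < k → GVTy Γ (.num n k) (.enum k)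
  | var {Γ n T} : Γ[n]? = some T → GVTy Γ (.var n) T
  | lam {Γ C T E U} : GCTy (T :: Γ) E C U → GVTy Γ (.lam E C) (.arr T E U)
  | fixv {Γ V T E U} : GVTy ((GTy.arr T E U) :: Γ) V (.arr T E U) →
      GVTy Γ (.fixv V) (.arr T E U)
/-- Typing judgment `Γ ⊢_E C : T` for GEPCF computations. In the rule for
`handle`, the handled computation uses the row `Eh`, the return clause binds
the returned value, and the clause for `σᵢ : Bᵢ ⇝ kᵢ` binds only the
parameter `x : Bᵢ` and has the enumeration type `kᵢ`. -/
inductive GCTy : List (GTy BV Op) → List Op → GComp CV Op → GTy BV Op → Prop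
  | app {Γ E V W T U} : GVTy Γ V (.arr T E U) → GVTy Γ W T →
      GCTy Γ E (.app V W) U
  | ret {Γ E V T} : GVTy Γ V T → GCTy Γ E (.ret V) T
  | letin {Γ E C B T U} : GCTy Γ E C T → GCTy (T :: Γ) E B U →
      GCTy Γ E (.letin C B) U
  | opc {Γ E σ V C T} : σ ∈ E → GVTy Γ V (.base (opPar σ)) →
      GCTy ((GTy.enum (opAr σ)) :: Γ) E C T → GCTy Γ E (.opc σ V C) T
  | case {Γ E k V T} {Cs : Fin k → GComp CV Op} : GVTy Γ V (.enum k) →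
      (∀ i, GCTy Γ E (Cs i) T) → GCTy Γ E (.case k V Cs) T
  | handle {Γ E Eh C Cr Hop T U} :
      GCTy Γ Eh C T →
      GCTy (T :: Γ) E Cr U →
      (∀ σ ∈ Eh, GCTy ((GTy.base (opPar σ)) :: Γ) E (Hop σ) (.enum (opAr σ))) →
      GCTy Γ E (.handle Eh Cr Hop C) U
end

end Typing

end GEPCF

namespace GEPCF

open LamY LamY.Tm

variable {CV Op : Type}

/-- The λY signature targeted by the translation: a constant for every
constant value, and a constant of arity `k+1` for every operation
`σ : B ⇝ k`. -/
def arF (opAr : Op → ℕ) : CV ⊕ Op → ℕ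
  | .inl _ => 0
  | .inr σ => opAr σ + 1

/-- The λY representation `λx₁…x_k.x_{n+1}` of the numeral `n̲ : k`. -/
def numStar (k n : ℕ) : Tm (CV ⊕ Op) :=
  (List.range k).foldr (fun _ M => .lam M) (.var (k - 1 - n))

/-- The type `o → (⟦k⟧ → o) → o` of the handler continuation for an
operation of arity `k`. -/
def hTy (k : ℕ) : Ty := .arr .o (.arr (.arr (constTy k) .o) .o)

/-- Translation of GEPCF types: `⟦B⟧ = o`, `⟦k⟧ = o^k → o`, and
`⟦T →_E U⟧ = ⟦T⟧ → ⟦E⟧ → (⟦U⟧ → o) → o` (with `⟦E⟧` curried). -/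
def trTy (opAr : Op → ℕ) {BV : Type} : GTy BV Op → Ty
  | .base _ => .o
  | .enum k => constTy k
  | .arr T E U =>
      .arr (trTy opAr T)
        (E.foldr (fun σ X => .arr (hTy (opAr σ)) X)
          (.arr (.arr (trTy opAr U) .o) .o))

/-- The type `⟦E⟧ → (⟦T⟧ → o) → o` of the translation of a computation
`Γ ⊢_E C : T` (with `⟦E⟧` curried). -/
def compTy (opAr : Op → ℕ) {BV : Type} (E : List Op) (T : GTy BV Op) : Ty :=
  E.foldr (fun σ X => .arr (hTy (opAr σ)) X) (.arr (.arr (trTy opAr T) .o) .o)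

/-- Iterated λ-abstraction. -/
def lams : ℕ → Tm (CV ⊕ Op) → Tm (CV ⊕ Op)
  | 0, M => M
  | n + 1, M => .lam (lams n M)

/-- The list of variables referring to the `n` handler continuations
`h₀,…,h_{n-1}`, when the continuation variable `c` has index `off`. -/
def hvars (n off : ℕ) : List (Tm (CV ⊕ Op)) :=
  List.ofFn fun j : Fin n => Tm.var (off + (n - (j : ℕ)))

/-- The renaming placing a term with one bound variable (index `0`) under `d`
extra enclosing binders. -/
def skip1 (d : ℕ) : ℕ → ℕ
  | 0 => 0
  | m + 1 => m + d

section Translation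

variable [DecidableEq Op] (opAr : Op → ℕ)

mutual
/-- The CPS translation with handler continuations, on values. -/
def trV (opAr : Op → ℕ) [DecidableEq Op] : GVal CV Op → Tm (CV ⊕ Op)
  | .cv v => .const (.inl v)
  | .num n k => numStar k n
  | .var n => .var n
  | .lam E C => .lam (trC opAr E C)
  | .fixv V => .fixY (.lam (trV opAr V))
/-- The CPS translation with handler continuations, on computations typed
with the effect row `E`: `⟦C⟧` expects `|E|` handler continuations `h⃗` and a
return continuation `c`. -/
def trC (opAr : Op → ℕ) [DecidableEq Op] (E : List Op) :
    GComp CV Op → Tm (CV ⊕ Op)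
  | .app V W => .app (trV opAr V) (trV opAr W)
  | .ret V =>
      lams (E.length + 1) (.app (.var 0) (rename (· + (E.length + 1)) (trV opAr V)))
  | .letin C B =>
      lams (E.length + 1)
        (appArgs (rename (· + (E.length + 1)) (trC opAr E C))
          (hvars E.length 0 ++
            [.lam (appArgs (rename (skip1 (E.length + 2)) (trC opAr E B))
              (hvars E.length 1 ++ [.var 1]))]))
  | .opc σ V C =>
      lams (E.length + 1)
        (.app
          (.app (.var (E.length - E.idxOf σ))
            (rename (· + (E.length + 1)) (trV opAr V)))
          (.lam (appArgs (rename (skip1 (E.length + 2)) (trC opAr E C))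
            (hvars E.length 1 ++ [.var 1]))))
  | .case k V Cs =>
      lams (E.length + 1)
        (appArgs (rename (· + (E.length + 1)) (trV opAr V))
          (List.ofFn fun i : Fin k =>
            appArgs (rename (· + (E.length + 1)) (trC opAr E (Cs i)))
              (hvars E.length 0 ++ [.var 0])))
  | .handle Eh Cr Hop C =>
      lams (E.length + 1)
        (appArgs (rename (· + (E.length + 1)) (trC opAr Eh C))
          (Eh.map (fun σ =>
              Tm.lam (.lam
                (appArgs
                  (rename (fun v => match v with
                    | 0 => 1
                    | m + 1 => m + (E.length + 3)) (trC opAr E (Hop σ)))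
                  (hvars E.length 2 ++ [.var 0])))) ++
            [.lam (appArgs (rename (skip1 (E.length + 2)) (trC opAr E Cr))
              (hvars E.length 1 ++ [.var 1]))]))
end

end Translation

end GEPCF
section Aux
open LamY LamY.Tm GEPCF

variable {F : Type} {ar : F → ℕ}

theorem hasTy_rename {Γ Δ : List Ty} {ρ : ℕ → ℕ} {M : Tm F} {T : Ty}
    (h : HasTy ar Γ M T) (hρ : ∀ n U, Γ[n]? = some U → Δ[ρ n]? = some U) :
    HasTy ar Δ (Tm.rename ρ M) T := by
  induction h generalizing Δ ρ with
  | var h => exact .var (hρ _ _ h)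
  | lam _ ih =>
    exact .lam (ih fun n U h => by
      cases n with
      | zero => simpa [Tm.upr] using h
      | succ m => simpa [Tm.upr] using hρ m U (by simpa using h))
  | app _ _ ih1 ih2 => exact .app (ih1 hρ) (ih2 hρ)
  | fix _ ih => exact .fix (ih hρ)
  | const f => exact .const f

theorem hasTy_weaken {Γ : List Ty} (P : List Ty) (d : ℕ) (hd : P.length = d)
    {M : Tm F} {T : Ty} (h : HasTy ar Γ M T) :
    HasTy ar (P ++ Γ) (Tm.rename (· + d) M) T := by
  refine hasTy_rename h fun n U hn => ?_
  rw [List.getElem?_append_right (by omega)]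
  simpa [hd] using hn

theorem hasTy_skip1 {Γ : List Ty} {A : Ty} (P : List Ty) (d : ℕ)
    (hd : P.length + 1 = d) {M : Tm F} {T : Ty} (h : HasTy ar (A :: Γ) M T) :
    HasTy ar (A :: (P ++ Γ)) (Tm.rename (GEPCF.skip1 d) M) T := by
  refine hasTy_rename h fun n U hn => ?_
  cases n with
  | zero => simpa [GEPCF.skip1] using hn
  | succ m =>
    show (A :: (P ++ Γ))[GEPCF.skip1 d (m + 1)]? = some U
    have h1 : GEPCF.skip1 d (m + 1) = (m + P.length) + 1 := by
      simp [GEPCF.skip1]; omega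
    rw [h1, List.getElem?_cons_succ, List.getElem?_append_right (by omega)]
    simpa using hn

/-- Iterated arrow type. -/
def mkArr (Ts : List Ty) (T : Ty) : Ty := Ts.foldr .arr T

theorem appArgs_ty {Γ : List Ty} {Ns : List (Tm F)} {Ts : List Ty} {M : Tm F} {T : Ty}
    (hM : HasTy ar Γ M (mkArr Ts T)) (hF : List.Forall₂ (HasTy ar Γ) Ns Ts) :
    HasTy ar Γ (Tm.appArgs M Ns) T := by
  induction hF generalizing M with
  | nil => exact hM
  | cons hN _ ih => exact ih (.app hM hN)

theorem lams_ty {CV Op : Type} {ar : CV ⊕ Op → ℕ} :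
    ∀ (L : List Ty) {Γ : List Ty} {M : Tm (CV ⊕ Op)} {T : Ty},
      HasTy ar (L.reverse ++ Γ) M T →
      HasTy ar Γ (GEPCF.lams L.length M) (mkArr L T) := by
  intro L
  induction L with
  | nil => intro Γ M T h; exact h
  | cons A L ih =>
    intro Γ M T h
    exact .lam (ih (by simpa [List.append_assoc] using h))

theorem constTy_eq_mkArr (k : ℕ) : constTy k = mkArr (List.replicate k .o) .o := by
  induction k with
  | zero => rfl
  | succ k ih => simp [constTy, mkArr, List.replicate_succ] at *; exact ih

theorem compTy_eq {Op BV : Type} (opAr : Op → ℕ) (E : List Op) (T : GTy BV Op) :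
    compTy opAr E T =
      mkArr ((E.map fun σ => hTy (opAr σ)) ++ [.arr (trTy opAr T) .o]) .o := by
  simp [compTy, mkArr, List.foldr_append, List.foldr_map]

theorem hvars_ty {CV Op : Type} {ar : CV ⊕ Op → ℕ} (P H Γ : List Ty) (off : ℕ)
    (hP : P.length = off + 1) :
    List.Forall₂ (HasTy ar (P ++ (H.reverse ++ Γ)))
      (GEPCF.hvars (CV := CV) (Op := Op) H.length off) H := by
  rw [List.forall₂_iff_get]
  constructor
  · simp [GEPCF.hvars]
  · intro i h1 h2
    simp only [GEPCF.hvars, List.get_eq_getElem, List.getElem_ofFn]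
    refine HasTy.var ?_
    have hi : i < H.length := h2
    rw [List.getElem?_append_right (by omega), hP]
    have h3 : off + (H.length - i) - (off + 1) = H.length - i - 1 := by omega
    rw [h3, List.getElem?_append_left (by simp; omega)]
    rw [List.getElem?_eq_getElem (by simp; omega)]
    congr 1
    rw [List.getElem_reverse]
    congr 1
    omega

theorem forall₂_map_map {α β γ : Type*} {R : β → γ → Prop} {f : α → β} {g : α → γ}
    {l : List α} (h : ∀ a ∈ l, R (f a) (g a)) :
    List.Forall₂ R (l.map f) (l.map g) := by
  induction l with
  | nil => simp
  | cons a l ih =>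
    simp only [List.map_cons]
    exact List.Forall₂.cons (h a (by simp)) (ih fun a ha => h a (by simp [ha]))

theorem forall₂_append' {α β : Type*} {R : α → β → Prop} {l₁ u₁ : List α} {l₂ u₂ : List β}
    (h1 : List.Forall₂ R l₁ l₂) (h2 : List.Forall₂ R u₁ u₂) :
    List.Forall₂ R (l₁ ++ u₁) (l₂ ++ u₂) := List.rel_append h1 h2

end Aux
section Aux2
open LamY LamY.Tm GEPCF

variable {CV Op BV : Type}

theorem lams_lam : ∀ (k : ℕ) (M : Tm (CV ⊕ Op)),
    GEPCF.lams k (.lam M) = GEPCF.lams (k + 1) M := by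
  intro k
  induction k with
  | zero => intro M; rfl
  | succ k ih => intro M; simp only [GEPCF.lams, ih]

theorem numStar_eq (k n : ℕ) :
    numStar (CV := CV) (Op := Op) k n = GEPCF.lams k (Tm.var (k - 1 - n)) := by
  suffices h : ∀ (k : ℕ) (b : Tm (CV ⊕ Op)),
      (List.range k).foldr (fun _ M => .lam M) b = GEPCF.lams k b by
    exact h k _
  intro k
  induction k with
  | zero => intro b; rfl
  | succ k ih =>
    intro b
    rw [List.range_succ, List.foldr_append]
    simp only [List.foldr_cons, List.foldr_nil]
    rw [ih, lams_lam]

theorem numStar_ty {ar : CV ⊕ Op → ℕ} {Γ : List Ty} {n k : ℕ} (h : n < k) :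
    HasTy ar Γ (numStar (CV := CV) (Op := Op) k n) (constTy k) := by
  rw [numStar_eq, constTy_eq_mkArr]
  have hk : k = (List.replicate k Ty.o).length := by simp
  rw [show GEPCF.lams k ((Tm.var (k - 1 - n)) : Tm (CV ⊕ Op))
      = GEPCF.lams (List.replicate k Ty.o).length (.var (k - 1 - n)) by rw [← hk]]
  refine lams_ty _ (.var ?_)
  rw [List.reverse_replicate, List.getElem?_append_left (by simp; omega)]
  rw [List.getElem?_replicate_of_lt (by omega)]

variable [DecidableEq Op] (opAr : Op → ℕ)

/-- to type `lams (|E|+1) M : compTy E T` it suffices to type the body. -/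
theorem comp_lams {M : Tm (CV ⊕ Op)} {Γc : List Ty} {E : List Op} {T : GTy BV Op}
    (h : HasTy (arF opAr) ((Ty.arr (trTy opAr T) .o) ::
        ((E.map fun σ => hTy (opAr σ)).reverse ++ Γc)) M .o) :
    HasTy (arF opAr) Γc (GEPCF.lams (E.length + 1) M) (compTy opAr E T) := by
  rw [compTy_eq]
  have hl : E.length + 1 = ((E.map fun σ => hTy (opAr σ)) ++ [Ty.arr (trTy opAr T) .o]).length := by
    simp
  rw [show GEPCF.lams (E.length + 1) M
      = GEPCF.lams ((E.map fun σ => hTy (opAr σ)) ++ [Ty.arr (trTy opAr T) .o]).length M by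
    rw [← hl]]
  refine lams_ty _ ?_
  simpa [List.reverse_append] using h

/-- typing of the continuation-clause λ-abstraction pattern. -/
theorem clause_lam (S U : GTy BV Op) (E : List Op) (Γc : List Ty) {B : Tm (CV ⊕ Op)}
    (hB : HasTy (arF opAr) (trTy opAr S :: Γc) B (compTy opAr E U)) :
    HasTy (arF opAr)
      (Ty.arr (trTy opAr U) .o :: ((E.map fun σ => hTy (opAr σ)).reverse ++ Γc))
      (.lam (Tm.appArgs (Tm.rename (GEPCF.skip1 (E.length + 2)) B)
        (GEPCF.hvars E.length 1 ++ [.var 1])))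
      (.arr (trTy opAr S) .o) := by
  refine HasTy.lam ?_
  have hr := hasTy_skip1 (Ty.arr (trTy opAr U) .o :: (E.map fun σ => hTy (opAr σ)).reverse)
      (E.length + 2) (by simp) hB
  rw [compTy_eq] at hr
  have hv : List.Forall₂ (HasTy (arF (CV := CV) opAr)
      (trTy opAr S :: ((trTy opAr U).arr .o :: ((E.map fun σ => hTy (opAr σ)).reverse ++ Γc))))
      (GEPCF.hvars (CV := CV) (Op := Op) E.length 1) (E.map fun σ => hTy (opAr σ)) := by
    have := hvars_ty (ar := arF (CV := CV) opAr) [trTy opAr S, Ty.arr (trTy opAr U) .o]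
        (E.map fun σ => hTy (opAr σ)) Γc 1 (by simp)
    simpa using this
  have h2 : List.Forall₂ (HasTy (arF (CV := CV) opAr)
      (trTy opAr S :: ((trTy opAr U).arr .o :: ((E.map fun σ => hTy (opAr σ)).reverse ++ Γc))))
      [Tm.var 1] [Ty.arr (trTy opAr U) .o] :=
    List.Forall₂.cons (HasTy.var (by simp)) List.Forall₂.nil
  exact appArgs_ty hr (forall₂_append' hv h2)

end Aux2
section Cases
open LamY LamY.Tm GEPCF

variable {BV CV Op : Type} [DecidableEq Op] (cvTy : CV → BV) (opPar : Op → BV) (opAr : Op → ℕ)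

theorem case_cv (Γ : List (GTy BV Op)) (v : CV) :
    HasTy (arF opAr) (Γ.map (trTy opAr)) (trV (CV := CV) (Op := Op) opAr (.cv v))
      (trTy opAr (.base (cvTy v))) := by
  simp only [trV, trTy]
  exact HasTy.const _

theorem case_num (Γ : List (GTy BV Op)) (n k : ℕ) (h : n < k) :
    HasTy (arF opAr) (Γ.map (trTy opAr)) (trV (CV := CV) (Op := Op) opAr (.num n k))
      (trTy opAr (GTy.enum k : GTy BV Op)) := by
  simp only [trV, trTy]
  exact numStar_ty h

theorem case_var (Γ : List (GTy BV Op)) (n : ℕ) (T : GTy BV Op) (h : Γ[n]? = some T) :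
    HasTy (arF opAr) (Γ.map (trTy opAr)) (trV (CV := CV) (Op := Op) opAr (.var n))
      (trTy opAr T) := by
  simp only [trV]
  exact HasTy.var (by simp [h])

theorem case_lam (Γ : List (GTy BV Op)) (C : GComp CV Op) (T : GTy BV Op) (E : List Op)
    (U : GTy BV Op)
    (ih : HasTy (arF opAr) ((T :: Γ).map (trTy opAr)) (trC opAr E C) (compTy opAr E U)) :
    HasTy (arF opAr) (Γ.map (trTy opAr)) (trV opAr (.lam E C)) (trTy opAr (.arr T E U)) := by
  simp only [trV, trTy]
  exact HasTy.lam (by simpa [compTy] using ih)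

theorem case_fixv (Γ : List (GTy BV Op)) (V : GVal CV Op) (T : GTy BV Op) (E : List Op)
    (U : GTy BV Op)
    (ih : HasTy (arF opAr) ((GTy.arr T E U :: Γ).map (trTy opAr)) (trV opAr V)
      (trTy opAr (.arr T E U))) :
    HasTy (arF opAr) (Γ.map (trTy opAr)) (trV opAr (.fixv V)) (trTy opAr (.arr T E U)) := by
  simp only [trV]
  exact HasTy.fix (HasTy.lam (by simpa using ih))

theorem case_app (Γ : List (GTy BV Op)) (E : List Op) (V W : GVal CV Op) (T U : GTy BV Op)
    (ih1 : HasTy (arF opAr) (Γ.map (trTy opAr)) (trV opAr V) (trTy opAr (.arr T E U)))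
    (ih2 : HasTy (arF opAr) (Γ.map (trTy opAr)) (trV opAr W) (trTy opAr T)) :
    HasTy (arF opAr) (Γ.map (trTy opAr)) (trC opAr E (.app V W)) (compTy opAr E U) := by
  simp only [trC]
  refine HasTy.app (T := trTy opAr T) ?_ ih2
  simpa [trTy, compTy] using ih1

theorem case_ret (Γ : List (GTy BV Op)) (E : List Op) (V : GVal CV Op) (T : GTy BV Op)
    (ihV : HasTy (arF opAr) (Γ.map (trTy opAr)) (trV opAr V) (trTy opAr T)) :
    HasTy (arF opAr) (Γ.map (trTy opAr)) (trC opAr E (.ret V)) (compTy opAr E T) := by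
  simp only [trC]
  refine comp_lams opAr ?_
  refine HasTy.app (T := trTy opAr T) (HasTy.var (by simp)) ?_
  exact hasTy_weaken ((Ty.arr (trTy opAr T) .o) :: (E.map fun σ => hTy (opAr σ)).reverse)
    (E.length + 1) (by simp) ihV

theorem case_letin (Γ : List (GTy BV Op)) (E : List Op) (C B : GComp CV Op) (T U : GTy BV Op)
    (ihC : HasTy (arF opAr) (Γ.map (trTy opAr)) (trC opAr E C) (compTy opAr E T))
    (ihB : HasTy (arF opAr) ((T :: Γ).map (trTy opAr)) (trC opAr E B) (compTy opAr E U)) :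
    HasTy (arF opAr) (Γ.map (trTy opAr)) (trC opAr E (.letin C B)) (compTy opAr E U) := by
  simp only [trC]
  refine comp_lams opAr ?_
  rw [compTy_eq] at ihC
  refine appArgs_ty (hasTy_weaken ((Ty.arr (trTy opAr U) .o) ::
      (E.map fun σ => hTy (opAr σ)).reverse) (E.length + 1) (by simp) ihC)
    (forall₂_append' ?_ ?_)
  · simpa using hvars_ty (ar := arF (CV := CV) opAr) [Ty.arr (trTy opAr U) .o]
      (E.map fun σ => hTy (opAr σ)) (Γ.map (trTy opAr)) 0 (by simp)
  · refine List.Forall₂.cons ?_ List.Forall₂.nil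
    exact clause_lam opAr T U E (Γ.map (trTy opAr)) (by simpa using ihB)

theorem case_opc (Γ : List (GTy BV Op)) (E : List Op) (σ : Op) (V : GVal CV Op)
    (C : GComp CV Op) (T : GTy BV Op) (mem : σ ∈ E)
    (ihV : HasTy (arF opAr) (Γ.map (trTy opAr)) (trV opAr V) (trTy opAr (.base (opPar σ))))
    (ihC : HasTy (arF opAr) ((GTy.enum (opAr σ) :: Γ).map (trTy opAr)) (trC opAr E C)
      (compTy opAr E T)) :
    HasTy (arF opAr) (Γ.map (trTy opAr)) (trC opAr E (.opc σ V C)) (compTy opAr E T) := by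
  simp only [trC]
  refine comp_lams opAr ?_
  have hidx : E.idxOf σ < E.length := List.idxOf_lt_length_iff.2 mem
  have hv := hvars_ty (ar := arF (CV := CV) opAr) [Ty.arr (trTy opAr T) .o]
      (E.map fun σ => hTy (opAr σ)) (Γ.map (trTy opAr)) 0 (by simp)
  rw [List.forall₂_iff_get] at hv
  have h2 := hv.2 (E.idxOf σ) (by simp [GEPCF.hvars]; omega) (by simp; omega)
  simp only [List.get_eq_getElem, GEPCF.hvars, List.getElem_ofFn, List.getElem_map] at h2
  rw [List.getElem_idxOf hidx] at h2
  refine HasTy.app (T := .arr (constTy (opAr σ)) .o)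
    (HasTy.app (T := .o) ?_ ?_) ?_
  · simpa [hTy] using h2
  · have := hasTy_weaken ((Ty.arr (trTy opAr T) .o) :: (E.map fun σ => hTy (opAr σ)).reverse)
      (E.length + 1) (by simp) ihV
    simpa [trTy] using this
  · have := clause_lam opAr (.enum (opAr σ)) T E (Γ.map (trTy opAr)) (by simpa using ihC)
    simpa [trTy] using this

theorem case_case (Γ : List (GTy BV Op)) (E : List Op) (k : ℕ) (V : GVal CV Op)
    (T : GTy BV Op) (Cs : Fin k → GComp CV Op)
    (ihV : HasTy (arF opAr) (Γ.map (trTy opAr)) (trV opAr V) (trTy opAr (GTy.enum k : GTy BV Op)))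
    (ihCs : ∀ i, HasTy (arF opAr) (Γ.map (trTy opAr)) (trC opAr E (Cs i)) (compTy opAr E T)) :
    HasTy (arF opAr) (Γ.map (trTy opAr)) (trC opAr E (.case k V Cs)) (compTy opAr E T) := by
  simp only [trC]
  refine comp_lams opAr ?_
  have hV : HasTy (arF opAr) (Γ.map (trTy opAr)) (trV opAr V)
      (mkArr (List.replicate k .o) .o) := by
    rw [← constTy_eq_mkArr]; exact ihV
  refine appArgs_ty (Ts := List.replicate k .o)
      (hasTy_weaken ((Ty.arr (trTy opAr T) .o) :: (E.map fun σ => hTy (opAr σ)).reverse)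
        (E.length + 1) (by simp) hV) ?_
  rw [List.forall₂_iff_get]
  refine ⟨by simp, fun i h1 h2 => ?_⟩
  simp only [List.get_eq_getElem, List.getElem_ofFn, List.getElem_replicate]
  have hi : i < k := by simpa using h2
  have hC := ihCs ⟨i, hi⟩
  rw [compTy_eq] at hC
  refine appArgs_ty (hasTy_weaken ((Ty.arr (trTy opAr T) .o) ::
      (E.map fun σ => hTy (opAr σ)).reverse) (E.length + 1) (by simp) hC)
    (forall₂_append' ?_ ?_)
  · simpa using hvars_ty (ar := arF (CV := CV) opAr) [Ty.arr (trTy opAr T) .o]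
      (E.map fun σ => hTy (opAr σ)) (Γ.map (trTy opAr)) 0 (by simp)
  · exact List.Forall₂.cons (HasTy.var (by simp)) List.Forall₂.nil

theorem case_handle (Γ : List (GTy BV Op)) (E Eh : List Op) (C Cr : GComp CV Op)
    (Hop : Op → GComp CV Op) (T U : GTy BV Op)
    (ihC : HasTy (arF opAr) (Γ.map (trTy opAr)) (trC opAr Eh C) (compTy opAr Eh T))
    (ihCr : HasTy (arF opAr) ((T :: Γ).map (trTy opAr)) (trC opAr E Cr) (compTy opAr E U))
    (ihHop : ∀ σ, σ ∈ Eh → HasTy (arF opAr) ((GTy.base (opPar σ) :: Γ).map (trTy opAr))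
        (trC opAr E (Hop σ)) (compTy opAr E (GTy.enum (opAr σ) : GTy BV Op))) :
    HasTy (arF opAr) (Γ.map (trTy opAr)) (trC opAr E (.handle Eh Cr Hop C))
      (compTy opAr E U) := by
  simp only [trC]
  refine comp_lams opAr ?_
  rw [compTy_eq] at ihC
  refine appArgs_ty (hasTy_weaken ((Ty.arr (trTy opAr U) .o) ::
      (E.map fun σ => hTy (opAr σ)).reverse) (E.length + 1) (by simp) ihC)
    (forall₂_append' ?_ ?_)
  · refine forall₂_map_map fun σ hσ => ?_
    show HasTy _ _ _ (.arr .o (.arr (.arr (constTy (opAr σ)) .o) .o))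
    refine HasTy.lam (HasTy.lam ?_)
    have hH := ihHop σ hσ
    simp only [List.map_cons] at hH
    rw [compTy_eq] at hH
    refine appArgs_ty (hasTy_rename hH ?_) (forall₂_append' ?_ ?_)
    · intro n Uu hn
      match n with
      | 0 =>
        simp only [List.getElem?_cons_zero, Option.some.injEq] at hn
        subst hn
        simp [trTy]
      | m + 1 =>
        simp only [List.getElem?_cons_succ] at hn
        show (_ :: _ :: _ :: _)[m + (E.length + 3)]? = some Uu
        rw [show m + (E.length + 3) = ((m + E.length) + 1 + 1) + 1 by omega,
          List.getElem?_cons_succ, List.getElem?_cons_succ, List.getElem?_cons_succ,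
          List.getElem?_append_right (by simp)]
        simpa using hn
    · simpa using hvars_ty (ar := arF (CV := CV) opAr)
        [.arr (constTy (opAr σ)) .o, .o, .arr (trTy opAr U) .o]
        (E.map fun σ => hTy (opAr σ)) (Γ.map (trTy opAr)) 2 (by simp)
    · refine List.Forall₂.cons (HasTy.var ?_) List.Forall₂.nil
      simp [trTy]
  · refine List.Forall₂.cons ?_ List.Forall₂.nil
    exact clause_lam opAr T U E (Γ.map (trTy opAr)) (by simpa using ihCr)

end Cases
open LamY LamY.Tm GEPCF in
/-- The translation from GEPCF to the λY-calculus preserves typing: if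
`Γ ⊢ V : T` then `⟦Γ⟧ ⊢ ⟦V⟧ : ⟦T⟧`, and if `Γ ⊢_E C : T` then
`⟦Γ⟧ ⊢ ⟦C⟧ : ⟦E⟧ → (⟦T⟧ → o) → o`. -/
theorem gepcf_translation_typing {BV CV Op : Type} [DecidableEq Op]
    (cvTy : CV → BV) (opPar : Op → BV) (opAr : Op → ℕ) :
    (∀ (Γ : List (GTy BV Op)) (V : GVal CV Op) (T : GTy BV Op),
        GVTy cvTy opPar opAr Γ V T →
        HasTy (arF opAr) (Γ.map (trTy opAr)) (trV opAr V) (trTy opAr T)) ∧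
    (∀ (Γ : List (GTy BV Op)) (E : List Op) (C : GComp CV Op) (T : GTy BV Op),
        GCTy cvTy opPar opAr Γ E C T →
        HasTy (arF opAr) (Γ.map (trTy opAr)) (trC opAr E C)
          (compTy opAr E T)) := by
  constructor
  · intro Γ V T h
    exact GVTy.rec
      (motive_1 := fun Γ V T _ =>
        HasTy (arF opAr) (Γ.map (trTy opAr)) (trV opAr V) (trTy opAr T))
      (motive_2 := fun Γ E C T _ =>
        HasTy (arF opAr) (Γ.map (trTy opAr)) (trC opAr E C) (compTy opAr E T))
      (fun {Γ} v => case_cv cvTy opAr Γ v)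
      (fun {Γ n k} a => case_num opAr Γ n k a)
      (fun {Γ n T} a => case_var opAr Γ n T a)
      (fun {Γ C T E U} _ ih => case_lam opAr Γ C T E U ih)
      (fun {Γ V T E U} _ ih => case_fixv opAr Γ V T E U ih)
      (fun {Γ E V W T U} _ _ ih1 ih2 => case_app opAr Γ E V W T U ih1 ih2)
      (fun {Γ E V T} _ ih => case_ret opAr Γ E V T ih)
      (fun {Γ E C B T U} _ _ ihC ihB => case_letin opAr Γ E C B T U ihC ihB)
      (fun {Γ E σ V C T} mem _ _ ihV ihC => case_opc opPar opAr Γ E σ V C T mem ihV ihC)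
      (fun {Γ E k V T Cs} _ _ ihV ihCs => case_case opAr Γ E k V T Cs ihV ihCs)
      (fun {Γ E Eh C Cr Hop T U} _ _ _ ihC ihCr ihHop =>
        case_handle opPar opAr Γ E Eh C Cr Hop T U ihC ihCr ihHop)
      h
  · intro Γ E C T h
    exact GCTy.rec
      (motive_1 := fun Γ V T _ =>
        HasTy (arF opAr) (Γ.map (trTy opAr)) (trV opAr V) (trTy opAr T))
      (motive_2 := fun Γ E C T _ =>
        HasTy (arF opAr) (Γ.map (trTy opAr)) (trC opAr E C) (compTy opAr E T))
      (fun {Γ} v => case_cv cvTy opAr Γ v)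
      (fun {Γ n k} a => case_num opAr Γ n k a)
      (fun {Γ n T} a => case_var opAr Γ n T a)
      (fun {Γ C T E U} _ ih => case_lam opAr Γ C T E U ih)
      (fun {Γ V T E U} _ ih => case_fixv opAr Γ V T E U ih)
      (fun {Γ E V W T U} _ _ ih1 ih2 => case_app opAr Γ E V W T U ih1 ih2)
      (fun {Γ E V T} _ ih => case_ret opAr Γ E V T ih)
      (fun {Γ E C B T U} _ _ ihC ihB => case_letin opAr Γ E C B T U ihC ihB)
      (fun {Γ E σ V C T} mem _ _ ihV ihC => case_opc opPar opAr Γ E σ V C T mem ihV ihC)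
      (fun {Γ E k V T Cs} _ _ ihV ihCs => case_case opAr Γ E k V T Cs ihV ihCs)
      (fun {Γ E Eh C Cr Hop T U} _ _ _ ihC ihCr ihHop =>
        case_handle opPar opAr Γ E Eh C Cr Hop T U ihC ihCr ihHop)
      h
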